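/- Suppose u ∈ C²((0,∞)) ∩ L¹((0,1)) solves (1/2)(σ²u)'' - (bu)' = 0 on (0,∞), where σ, b satisfy: b ∈ C¹ with b(0)=0, b'(0)>0; σ ∈ C² with σ(0)=0, σ'(0)≠0; and Λ₀ := b'(0) - |σ'(0)|²/2 > 0. Then u = C·u₀^G for some constant C, where u₀^G(x) = (1/σ²(x))·exp(2∫₁^x b/σ² ds). -/

import Mathlib

open MeasureTheory intervalIntegral Set Filter Real

set_option maxHeartbeats 4000000 in
theorem stmt4 (b σ u : ℝ → ℝ)
    (hb : ContDiffOn ℝ 1 b (Set.Ici 0)) (hb0 : b 0 = 0)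
    (hb'0 : 0 < derivWithin b (Set.Ici 0) 0)
    (hσ : ContDiffOn ℝ 2 σ (Set.Ici 0)) (hσ0 : σ 0 = 0)
    (hσ'0 : derivWithin σ (Set.Ici 0) 0 ≠ 0)
    (hσpos : ∀ x ∈ Set.Ioi (0 : ℝ), σ x ≠ 0)
    (hΛ : 0 < derivWithin b (Set.Ici 0) 0 - (derivWithin σ (Set.Ici 0) 0) ^ 2 / 2)
    (hu : ContDiffOn ℝ 2 u (Set.Ioi 0))
    (huL1 : IntegrableOn u (Set.Ioo 0 1))
    (hode : ∀ x ∈ Set.Ioi (0 : ℝ),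
      (1 / 2) * deriv (deriv (fun y => σ y ^ 2 * u y)) x
        - deriv (fun y => b y * u y) x = 0) :
    ∃ C : ℝ, ∀ x ∈ Set.Ioi (0 : ℝ),
      u x = C * ((1 / σ x ^ 2) * Real.exp (2 * ∫ s in (1 : ℝ)..x, b s / σ s ^ 2)) := by
  have hIoi : (Set.Ioi (0:ℝ)) ⊆ Set.Ici 0 := Set.Ioi_subset_Ici le_rfl
  set q : ℝ → ℝ := fun s => b s / σ s ^ 2 with hq_def
  have hqc : ContinuousOn q (Set.Ioi 0) := by
    apply ContinuousOn.div ((hb.continuousOn).mono hIoi)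
      (((hσ.continuousOn).mono hIoi).pow 2)
    intro x hx; exact pow_ne_zero 2 (hσpos x hx)
  clear_value q
  have huIcc : ∀ x z : ℝ, 0 < x → 0 < z → Set.uIcc x z ⊆ Set.Ioi 0 :=
    fun x z hx hz y hy => lt_of_lt_of_le (lt_min hx hz) hy.1
  have hqII : ∀ x z : ℝ, 0 < x → 0 < z → IntervalIntegrable q volume x z :=
    fun x z hx hz => (hqc.mono (huIcc x z hx hz)).intervalIntegrable
  set F : ℝ → ℝ := fun x => ∫ s in (1:ℝ)..x, q s with hF_def
  have hFadd : ∀ x z : ℝ, 0 < x → 0 < z → F x + (∫ s in x..z, q s) = F z := by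
    intro x z hx hz
    exact intervalIntegral.integral_add_adjacent_intervals (hqII 1 x one_pos hx) (hqII x z hx hz)
  have hFder : ∀ x ∈ Set.Ioi (0:ℝ), HasDerivAt F (q x) x := by
    intro x hx
    exact intervalIntegral.integral_hasDerivAt_right (hqII 1 x one_pos hx)
      (hqc.stronglyMeasurableAtFilter isOpen_Ioi x hx)
      (hqc.continuousAt (isOpen_Ioi.mem_nhds hx))
  have hF1 : F 1 = 0 := intervalIntegral.integral_same
  clear_value F
  set w : ℝ → ℝ := fun y => σ y ^ 2 * u y with hw_def
  have hwC : ContDiffOn ℝ 2 w (Set.Ioi 0) := ((hσ.mono hIoi).pow 2).mul hu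
  clear_value w
  have hw1 : ContDiffOn ℝ 1 (deriv w) (Set.Ioi 0) :=
    hwC.deriv_of_isOpen isOpen_Ioi le_rfl
  have hbuC : ContDiffOn ℝ 1 (fun y => b y * u y) (Set.Ioi 0) :=
    (hb.mono hIoi).mul (hu.of_le one_le_two)
  set g : ℝ → ℝ := fun y => (1/2) * deriv w y - b y * u y with hg_def
  have hgd : DifferentiableOn ℝ g (Set.Ioi 0) :=
    ((hw1.differentiableOn one_ne_zero).const_mul _).sub (hbuC.differentiableOn one_ne_zero)
  clear_value g
  have hgder0 : ∀ x ∈ Set.Ioi (0:ℝ), HasDerivAt g 0 x := by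
    intro x hx
    have h1 : DifferentiableAt ℝ (deriv w) x :=
      (hw1.differentiableOn one_ne_zero).differentiableAt (isOpen_Ioi.mem_nhds hx)
    have h2 : DifferentiableAt ℝ (fun y => b y * u y) x :=
      (hbuC.differentiableOn one_ne_zero).differentiableAt (isOpen_Ioi.mem_nhds hx)
    have hder := (h1.hasDerivAt.const_mul (1/2:ℝ)).sub h2.hasDerivAt
    have heq := hode x hx
    rw [hg_def]
    refine hder.congr_deriv (Eq.symm ?_)
    linarith
  have hgconst : ∀ x ∈ Set.Ioi (0:ℝ), g x = g 1 := by
    intro x hx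
    refine (convex_Ioi (0:ℝ)).is_const_of_fderivWithin_eq_zero hgd ?_ hx (by norm_num)
    intro z hz
    have h0 : HasFDerivAt g (0 : ℝ →L[ℝ] ℝ) z := by
      have e0 : ContinuousLinearMap.smulRight (1 : ℝ →L[ℝ] ℝ) (0:ℝ) = 0 := by ext; simp
      exact e0 ▸ (hgder0 z hz).hasFDerivAt
    rw [fderivWithin_of_isOpen isOpen_Ioi hz, h0.fderiv]
  set c : ℝ := g 1 with hc_def
  clear_value c
  have hwder : ∀ x ∈ Set.Ioi (0:ℝ), HasDerivAt w (2 * (b x * u x) + 2*c) x := by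
    intro x hx
    have hd : DifferentiableAt ℝ w x :=
      (hwC.differentiableOn two_ne_zero).differentiableAt (isOpen_Ioi.mem_nhds hx)
    have h1 := hgconst x hx
    simp only [hg_def] at h1
    have : deriv w x = 2 * (b x * u x) + 2*c := by linarith
    exact this ▸ hd.hasDerivAt
  set G : ℝ → ℝ := fun y => ∫ t in (1:ℝ)..y, Real.exp (-(2 * F t)) with hG_def
  have hFcont : ContinuousOn F (Set.Ioi 0) :=
    fun x hx => (hFder x hx).continuousAt.continuousWithinAt
  have hEc : ContinuousOn (fun t => Real.exp (-(2 * F t))) (Set.Ioi 0) :=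
    Real.continuous_exp.comp_continuousOn ((continuousOn_const.mul hFcont).neg)
  have hEII : ∀ x z : ℝ, 0 < x → 0 < z →
      IntervalIntegrable (fun t => Real.exp (-(2 * F t))) volume x z := by
    intro x z hx hz; exact (hEc.mono (huIcc x z hx hz)).intervalIntegrable
  have hGder : ∀ x ∈ Set.Ioi (0:ℝ), HasDerivAt G (Real.exp (-(2 * F x))) x := by
    intro x hx
    exact intervalIntegral.integral_hasDerivAt_right (hEII 1 x one_pos hx)
      (hEc.stronglyMeasurableAtFilter isOpen_Ioi x hx)
      (hEc.continuousAt (isOpen_Ioi.mem_nhds hx))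
  have hG1 : G 1 = 0 := intervalIntegral.integral_same
  clear_value G
  set h : ℝ → ℝ := fun y => w y * Real.exp (-(2 * F y)) with hh_def
  clear_value h
  have hhder : ∀ x ∈ Set.Ioi (0:ℝ),
      HasDerivAt h ((2*c) * Real.exp (-(2 * F x))) x := by
    intro x hx
    have hFd := hFder x hx
    have he : HasDerivAt (fun y => Real.exp (-(2 * F y)))
        (Real.exp (-(2 * F x)) * (-(2 * q x))) x :=
      (Real.hasDerivAt_exp _).comp x ((hFd.const_mul 2).neg)
    have hprod := (hwder x hx).mul he
    rw [hh_def]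
    refine hprod.congr_deriv (Eq.symm ?_)
    have hσx := hσpos x hx
    have hkey : w x * q x = b x * u x := by
      rw [hw_def, hq_def]; field_simp
    linear_combination (2 * Real.exp (-(2 * F x))) * hkey
  have hφconst : ∀ x ∈ Set.Ioi (0:ℝ), h x - 2*c*G x = h 1 - 2*c*G 1 := by
    have hφd : DifferentiableOn ℝ (fun y => h y - 2*c*G y) (Set.Ioi 0) := fun z hz =>
      ((hhder z hz).sub ((hGder z hz).const_mul (2*c))).differentiableAt.differentiableWithinAt
    intro x hx
    refine (convex_Ioi (0:ℝ)).is_const_of_fderivWithin_eq_zero hφd ?_ hx (by norm_num)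
    intro z hz
    have h0 : HasDerivAt (fun y => h y - 2*c*G y) 0 z := by
      have := (hhder z hz).sub ((hGder z hz).const_mul (2*c))
      refine this.congr_deriv (Eq.symm ?_); ring
    have h0' : HasFDerivAt (fun y => h y - 2*c*G y) (0 : ℝ →L[ℝ] ℝ) z := by
      have e0 : ContinuousLinearMap.smulRight (1 : ℝ →L[ℝ] ℝ) (0:ℝ) = 0 := by ext; simp
      exact e0 ▸ h0.hasFDerivAt
    rw [fderivWithin_of_isOpen isOpen_Ioi hz, h0'.fderiv]
  set A : ℝ := σ 1 ^ 2 * u 1 with hA_def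
  clear_value A
  have hformula : ∀ x ∈ Set.Ioi (0:ℝ),
      u x = (A + 2*c*G x) * Real.exp (2 * F x) / σ x ^ 2 := by
    intro x hx
    have h1 := hφconst x hx
    rw [hG1, hh_def] at h1
    simp only [hF1] at h1
    have hx2 : Real.exp (-(2 * F x)) * Real.exp (2 * F x) = 1 := by
      rw [← Real.exp_add]; norm_num
    have hA1 : w 1 = A := by rw [hw_def, hA_def]
    have h1' : w x * Real.exp (-(2 * F x)) = A + 2*c*G x := by
      rw [← hA1]; norm_num at h1 ⊢; linarith
    have hwx : w x = (A + 2*c*G x) * Real.exp (2 * F x) := by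
      calc w x = w x * (Real.exp (-(2*F x)) * Real.exp (2*F x)) := by rw [hx2]; ring
        _ = (A + 2*c*G x) * Real.exp (2*F x) := by rw [← mul_assoc, h1']
    have hσx := pow_ne_zero 2 (hσpos x hx)
    rw [eq_div_iff hσx, ← hwx, hw_def]; ring
  have hc0 : c = 0 := by
    by_contra hcne
    set b' := derivWithin b (Set.Ici 0) 0 with hb'_def
    set s' := derivWithin σ (Set.Ici 0) 0 with hs'_def
    clear_value b' s'
    have hs2 : (0:ℝ) < s' ^ 2 :=
      lt_of_le_of_ne (sq_nonneg s') (Ne.symm (pow_ne_zero 2 hσ'0))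
    set α : ℝ := 2 * b' / s' ^ 2 with hα_def
    clear_value α
    have hα1 : (1:ℝ) < α := by
      rw [hα_def, lt_div_iff₀ hs2]; linarith
    set ε : ℝ := (α - 1)/2 with hε_def
    clear_value ε
    have hεpos : 0 < ε := by rw [hε_def]; linarith
    set β : ℝ := α - ε with hβ_def
    clear_value β
    have hβ1 : (1:ℝ) < β := by rw [hβ_def, hε_def]; linarith
    have hαε : (0:ℝ) < α + ε := by linarith
    -- slopes tend to the one-sided derivatives
    have hslope : ∀ f : ℝ → ℝ, ContDiffOn ℝ 1 f (Set.Ici 0) → f 0 = 0 →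
        Tendsto (fun y => f y / y) (nhdsWithin 0 (Set.Ioi 0))
          (nhds (derivWithin f (Set.Ici 0) 0)) := by
      intro f hf hf0
      have hd : HasDerivWithinAt f (derivWithin f (Set.Ici 0) 0) (Set.Ici 0) 0 :=
        (hf.differentiableOn one_ne_zero 0 Set.self_mem_Ici).hasDerivWithinAt
      have ht := hasDerivWithinAt_iff_tendsto_slope.1 hd
      have hset : (Set.Ici (0:ℝ)) \ {0} = Set.Ioi 0 := by
        ext y
        simp only [Set.mem_diff, Set.mem_Ici, Set.mem_singleton_iff, Set.mem_Ioi]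
        constructor
        · rintro ⟨h1, h2⟩; exact lt_of_le_of_ne h1 (Ne.symm h2)
        · intro h; exact ⟨h.le, h.ne'⟩
      rw [hset] at ht
      refine ht.congr' ?_
      filter_upwards [self_mem_nhdsWithin] with y hy
      rw [slope_def_field, hf0, sub_zero, sub_zero]
    have hbl : Tendsto (fun y => b y / y) (nhdsWithin 0 (Set.Ioi 0)) (nhds b') := by
      rw [hb'_def]; exact hslope b hb hb0
    have hσl : Tendsto (fun y => σ y / y) (nhdsWithin 0 (Set.Ioi 0)) (nhds s') := by
      rw [hs'_def]; exact hslope σ (hσ.of_le one_le_two) hσ0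
    have hσ2l : Tendsto (fun y => σ y ^ 2 / y ^ 2) (nhdsWithin 0 (Set.Ioi 0)) (nhds (s' ^ 2)) := by
      refine (hσl.pow 2).congr fun y => ?_
      rw [div_pow]
    have hψl : Tendsto (fun y => 2 * y * q y) (nhdsWithin 0 (Set.Ioi 0)) (nhds α) := by
      have hd : Tendsto (fun y => 2 * (b y / y) / (σ y ^ 2 / y ^ 2))
          (nhdsWithin 0 (Set.Ioi 0)) (nhds (2 * b' / s' ^ 2)) :=
        (hbl.const_mul 2).div hσ2l (ne_of_gt hs2)
      rw [hα_def]
      refine hd.congr' ?_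
      filter_upwards [self_mem_nhdsWithin] with y hy
      have hy0 : (0:ℝ) < y := hy
      have hσy := hσpos y hy
      rw [hq_def]
      field_simp
    -- choose δ
    have hev : ∀ᶠ y in nhdsWithin (0:ℝ) (Set.Ioi 0),
        (β < 2 * y * q y ∧ 2 * y * q y < α + ε) ∧
        (s' ^ 2 / 2 < σ y ^ 2 / y ^ 2 ∧ σ y ^ 2 / y ^ 2 < 2 * s' ^ 2) := by
      have hβα : β < α := by rw [hβ_def]; linarith
      filter_upwards [hψl.eventually (Ioo_mem_nhds (a := β) (b := α + ε) hβα (by linarith)),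
        hσ2l.eventually (Ioo_mem_nhds (a := s' ^ 2 / 2) (b := 2 * s' ^ 2)
          (by linarith) (by linarith))] with y h1 h2
      exact ⟨⟨h1.1, h1.2⟩, ⟨h2.1, h2.2⟩⟩
    obtain ⟨δ₀, hδ₀pos, hδ₀sub⟩ := mem_nhdsGT_iff_exists_Ioc_subset.1 hev
    set δ : ℝ := min δ₀ 1 with hδ_def
    have hδpos : 0 < δ := lt_min hδ₀pos one_pos
    have hδ1 : δ ≤ 1 := min_le_right _ _
    have hδδ₀ : δ ≤ δ₀ := min_le_left _ _
    clear_value δ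
    have hgood : ∀ y ∈ Set.Ioc (0:ℝ) δ,
        (β < 2 * y * q y ∧ 2 * y * q y < α + ε) ∧
        (s' ^ 2 / 2 < σ y ^ 2 / y ^ 2 ∧ σ y ^ 2 / y ^ 2 < 2 * s' ^ 2) :=
      fun y hy => hδ₀sub ⟨hy.1, le_trans hy.2 hδδ₀⟩
    have hqub : ∀ y ∈ Set.Ioc (0:ℝ) δ, q y ≤ (α + ε)/2 * (1/y) := by
      intro y hy
      have h := (hgood y hy).1.2
      have hy0 : 0 < y := hy.1
      rw [show (α+ε)/2 * (1/y) = (α+ε)/(2*y) by ring, le_div_iff₀ (by linarith)]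
      nlinarith
    have hqlb : ∀ y ∈ Set.Ioc (0:ℝ) δ, β/2 * (1/y) ≤ q y := by
      intro y hy
      have h := (hgood y hy).1.1
      have hy0 : 0 < y := hy.1
      rw [show β/2 * (1/y) = β/(2*y) by ring, div_le_iff₀ (by linarith)]
      nlinarith
    have hσub : ∀ y ∈ Set.Ioc (0:ℝ) δ, σ y ^ 2 ≤ 2 * s' ^ 2 * y ^ 2 := by
      intro y hy
      have h := (hgood y hy).2.2
      have hy2 : (0:ℝ) < y ^ 2 := pow_pos hy.1 2
      rw [div_lt_iff₀ hy2] at h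
      nlinarith
    have hσlb : ∀ y ∈ Set.Ioc (0:ℝ) δ, s' ^ 2 / 2 * y ^ 2 ≤ σ y ^ 2 := by
      intro y hy
      have h := (hgood y hy).2.1
      have hy2 : (0:ℝ) < y ^ 2 := pow_pos hy.1 2
      rw [lt_div_iff₀ hy2] at h
      nlinarith
    -- integral comparisons for F
    have hFub : ∀ x z : ℝ, 0 < x → x ≤ z → z ≤ δ →
        F z - F x ≤ (α + ε)/2 * (Real.log z - Real.log x) := by
      intro x z hx hxz hzδ
      have hz : 0 < z := lt_of_lt_of_le hx hxz
      have hFe : F z - F x = ∫ s in x..z, q s := by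
        have := hFadd x z hx hz; linarith
      have hInt2 : IntervalIntegrable (fun s => (α+ε)/2 * (1/s)) volume x z := by
        apply ContinuousOn.intervalIntegrable
        refine continuousOn_const.mul (continuousOn_const.div continuousOn_id ?_)
        exact fun s hs => ne_of_gt (huIcc x z hx hz hs)
      have hmono := intervalIntegral.integral_mono_on hxz (hqII x z hx hz) hInt2
        (fun s hs => hqub s ⟨lt_of_lt_of_le hx hs.1, le_trans hs.2 hzδ⟩)
      rw [hFe]
      calc (∫ s in x..z, q s) ≤ ∫ s in x..z, (α+ε)/2 * (1/s) := hmono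
        _ = (α+ε)/2 * ∫ s in x..z, 1/s := intervalIntegral.integral_const_mul _ _
        _ = (α+ε)/2 * (Real.log z - Real.log x) := by
            rw [integral_one_div_of_pos hx hz, Real.log_div hz.ne' hx.ne']
    have hFlb : ∀ x z : ℝ, 0 < x → x ≤ z → z ≤ δ →
        β/2 * (Real.log z - Real.log x) ≤ F z - F x := by
      intro x z hx hxz hzδ
      have hz : 0 < z := lt_of_lt_of_le hx hxz
      have hFe : F z - F x = ∫ s in x..z, q s := by
        have := hFadd x z hx hz; linarith
      have hInt2 : IntervalIntegrable (fun s => β/2 * (1/s)) volume x z := by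
        apply ContinuousOn.intervalIntegrable
        refine continuousOn_const.mul (continuousOn_const.div continuousOn_id ?_)
        exact fun s hs => ne_of_gt (huIcc x z hx hz hs)
      have hmono := intervalIntegral.integral_mono_on hxz hInt2 (hqII x z hx hz)
        (fun s hs => hqlb s ⟨lt_of_lt_of_le hx hs.1, le_trans hs.2 hzδ⟩)
      rw [hFe]
      calc β/2 * (Real.log z - Real.log x) = β/2 * ∫ s in x..z, 1/s := by
            rw [integral_one_div_of_pos hx hz, Real.log_div hz.ne' hx.ne']
        _ = ∫ s in x..z, β/2 * (1/s) := (intervalIntegral.integral_const_mul _ _).symm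
        _ ≤ ∫ s in x..z, q s := hmono
    -- continuity of u₀
    have hu₀cont : ContinuousOn (fun x => Real.exp (2 * F x) / σ x ^ 2) (Set.Ioi 0) := by
      refine ContinuousOn.div ?_ (((hσ.continuousOn).mono hIoi).pow 2)
        (fun x hx => pow_ne_zero 2 (hσpos x hx))
      exact Real.continuous_exp.comp_continuousOn (continuousOn_const.mul hFcont)
    -- integrability of u₀ on (0,1)
    have hu₀int : IntegrableOn (fun x => Real.exp (2 * F x) / σ x ^ 2) (Set.Ioo 0 1) := by
      have hrpow : IntegrableOn (fun x : ℝ => x ^ (β - 2 : ℝ)) (Set.Ioo 0 δ) :=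
        (integrableOn_Ioo_rpow_iff hδpos).2 (by linarith)
      set K : ℝ := Real.exp (2 * F δ) / δ ^ (β:ℝ) * (2 / s' ^ 2) with hK_def
      clear_value K
      have hu₀b : ∀ x ∈ Set.Ioo (0:ℝ) δ,
          Real.exp (2 * F x) / σ x ^ 2 ≤ K * x ^ (β - 2 : ℝ) := by
        intro x hx
        have hx0 : 0 < x := hx.1
        have hlog := hFlb x δ hx0 hx.2.le le_rfl
        have hexp : Real.exp (2 * F x) ≤ Real.exp (2 * F δ) * (x ^ (β:ℝ) / δ ^ (β:ℝ)) := by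
          have h1 : 2 * F x ≤ 2 * F δ + β * Real.log x - β * Real.log δ := by linarith
          calc Real.exp (2 * F x) ≤ Real.exp (2 * F δ + β * Real.log x - β * Real.log δ) :=
                Real.exp_le_exp.2 h1
            _ = Real.exp (2 * F δ) * (x ^ (β:ℝ) / δ ^ (β:ℝ)) := by
                rw [Real.exp_sub, Real.exp_add, Real.rpow_def_of_pos hx0,
                  Real.rpow_def_of_pos hδpos]
                ring_nf
        have hσlbx := hσlb x ⟨hx0, hx.2.le⟩
        have hden : (0:ℝ) < s' ^ 2 / 2 * x ^ 2 := mul_pos (by linarith) (by positivity)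
        have hstep : Real.exp (2 * F x) / σ x ^ 2 ≤
            (Real.exp (2 * F δ) * (x ^ (β:ℝ) / δ ^ (β:ℝ))) / (s' ^ 2 / 2 * x ^ 2) :=
          div_le_div₀ (by positivity) hexp hden hσlbx
        refine le_trans hstep (le_of_eq ?_)
        rw [hK_def, show x ^ (β - 2 : ℝ) = x ^ (β:ℝ) / x ^ ((2:ℕ):ℝ) from
          (by norm_num : ((2:ℕ):ℝ) = (2:ℝ)) ▸ Real.rpow_sub hx0 β 2, Real.rpow_natCast]
        have hδβ : (0:ℝ) < δ ^ (β:ℝ) := Real.rpow_pos_of_pos hδpos _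
        field_simp
      have hu₀meas : AEStronglyMeasurable (fun x => Real.exp (2 * F x) / σ x ^ 2)
          (volume.restrict (Set.Ioo 0 δ)) :=
        (hu₀cont.mono Set.Ioo_subset_Ioi_self).aestronglyMeasurable measurableSet_Ioo
      have hint1 : IntegrableOn (fun x => Real.exp (2 * F x) / σ x ^ 2) (Set.Ioo 0 δ) := by
        refine Integrable.mono' (hrpow.const_mul K) hu₀meas ?_
        rw [ae_restrict_iff' measurableSet_Ioo]
        filter_upwards with x hx
        rw [Real.norm_eq_abs, abs_of_nonneg (by positivity)]
        exact hu₀b x hx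
      have hint2 : IntegrableOn (fun x => Real.exp (2 * F x) / σ x ^ 2) (Set.Icc δ 1) := by
        refine ContinuousOn.integrableOn_Icc (hu₀cont.mono ?_)
        exact fun y hy => lt_of_lt_of_le hδpos hy.1
      refine (hint1.union hint2).mono_set ?_
      intro y hy
      rcases lt_or_ge y δ with hlt | hge
      · exact Or.inl ⟨hy.1, hlt⟩
      · exact Or.inr ⟨hge, hy.2.le⟩
    -- G·u₀ is integrable on (0,1) since c ≠ 0
    have hGu₀int : IntegrableOn (fun x => G x * (Real.exp (2 * F x) / σ x ^ 2)) (Set.Ioo 0 1) := by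
      have h1 : IntegrableOn
          (fun x => (u x - A * (Real.exp (2 * F x) / σ x ^ 2)) / (2 * c)) (Set.Ioo 0 1) :=
        (huL1.sub (hu₀int.const_mul A)).div_const (2 * c)
      refine IntegrableOn.congr_fun h1 ?_ measurableSet_Ioo
      intro x hx
      show (u x - A * (Real.exp (2 * F x) / σ x ^ 2)) / (2 * c)
          = G x * (Real.exp (2 * F x) / σ x ^ 2)
      have hfx := hformula x hx.1
      have hσx := pow_ne_zero 2 (hσpos x hx.1)
      have hc2 : (2:ℝ) * c ≠ 0 := mul_ne_zero two_ne_zero hcne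
      rw [hfx]
      field_simp
      ring
    -- pointwise lower bound on -(G·u₀) near 0
    set e₀ : ℝ := Real.exp (-((α + ε) * Real.log 2)) with he₀_def
    have he₀pos : 0 < e₀ := he₀_def ▸ Real.exp_pos _
    clear_value e₀
    have hGlb : ∀ x ∈ Set.Ioo (0:ℝ) (δ/2),
        e₀ / (2 * s' ^ 2) * (1/x) ≤ -(G x * (Real.exp (2 * F x) / σ x ^ 2)) := by
      intro x hx
      have hx0 : 0 < x := hx.1
      have hx2δ : 2 * x ≤ δ := by linarith [hx.2]
      have hxδ : x ≤ δ := by linarith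
      have h2x1 : 2 * x ≤ 1 := le_trans hx2δ hδ1
      have hGx : G x = - ∫ t in x..(1:ℝ), Real.exp (-(2 * F t)) := by
        rw [hG_def]
        exact intervalIntegral.integral_symm x 1
      have hsplit : (∫ t in x..(2*x), Real.exp (-(2 * F t)))
            + (∫ t in (2*x)..(1:ℝ), Real.exp (-(2 * F t)))
          = ∫ t in x..(1:ℝ), Real.exp (-(2 * F t)) :=
        intervalIntegral.integral_add_adjacent_intervals
          (hEII x (2*x) hx0 (by linarith)) (hEII (2*x) 1 (by linarith) one_pos)
      have hpos2 : 0 ≤ ∫ t in (2*x)..(1:ℝ), Real.exp (-(2 * F t)) :=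
        intervalIntegral.integral_nonneg h2x1 (fun t _ => (Real.exp_pos _).le)
      have hmid : x * (Real.exp (-(2 * F x)) * e₀) ≤ ∫ t in x..(2*x), Real.exp (-(2 * F t)) := by
        have hle : ∀ t ∈ Set.Icc x (2*x),
            Real.exp (-(2 * F x)) * e₀ ≤ Real.exp (-(2 * F t)) := by
          intro t ht
          have ht0 : 0 < t := lt_of_lt_of_le hx0 ht.1
          have hFt := hFub x t hx0 ht.1 (le_trans ht.2 hx2δ)
          have hlog : Real.log t - Real.log x ≤ Real.log 2 := by
            rw [← Real.log_div ht0.ne' hx0.ne']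
            refine Real.log_le_log (by positivity) ?_
            rw [div_le_iff₀ hx0]; linarith [ht.2]
          have h1 : -(2 * F t) ≥ -(2 * F x) - (α + ε) * Real.log 2 := by
            nlinarith [mul_le_mul_of_nonneg_left hlog (by linarith : (0:ℝ) ≤ (α+ε)/2)]
          calc Real.exp (-(2 * F x)) * e₀
              = Real.exp (-(2 * F x) - (α + ε) * Real.log 2) := by
                rw [he₀_def, ← Real.exp_add]; ring_nf
            _ ≤ Real.exp (-(2 * F t)) := Real.exp_le_exp.2 (by linarith)
        calc x * (Real.exp (-(2 * F x)) * e₀)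
            = (2*x - x) • (Real.exp (-(2 * F x)) * e₀) := by
              rw [smul_eq_mul]; ring
          _ = ∫ _t in x..(2*x), (Real.exp (-(2 * F x)) * e₀) :=
              (intervalIntegral.integral_const _).symm
          _ ≤ ∫ t in x..(2*x), Real.exp (-(2 * F t)) :=
              intervalIntegral.integral_mono_on (by linarith) intervalIntegrable_const
                (hEII x (2*x) hx0 (by linarith)) hle
      have hIlb : x * (Real.exp (-(2 * F x)) * e₀) ≤ ∫ t in x..(1:ℝ), Real.exp (-(2 * F t)) := by
        linarith
      have hσubx := hσub x ⟨hx0, hxδ⟩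
      have hσx2 : (0:ℝ) < σ x ^ 2 :=
        lt_of_lt_of_le (mul_pos (by linarith) (by positivity)) (hσlb x ⟨hx0, hxδ⟩)
      have hcancel : Real.exp (-(2 * F x)) * Real.exp (2 * F x) = 1 := by
        rw [← Real.exp_add]; norm_num
      have step1 : x * (Real.exp (-(2 * F x)) * e₀) * (Real.exp (2 * F x) / σ x ^ 2)
          ≤ (∫ t in x..(1:ℝ), Real.exp (-(2 * F t))) * (Real.exp (2 * F x) / σ x ^ 2) :=
        mul_le_mul_of_nonneg_right hIlb (by positivity)
      have step2 : x * (Real.exp (-(2 * F x)) * e₀) * (Real.exp (2 * F x) / σ x ^ 2)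
          = x * e₀ / σ x ^ 2 := by
        field_simp
        linear_combination ((σ x)⁻¹ ^ 2) * hcancel
      have step3 : e₀ / (2 * s' ^ 2) * (1/x) ≤ x * e₀ / σ x ^ 2 := by
        rw [show e₀ / (2 * s' ^ 2) * (1/x) = e₀ / (2 * s' ^ 2 * x) by ring,
          div_le_div_iff₀ (by nlinarith) hσx2]
        nlinarith [mul_le_mul_of_nonneg_left hσubx he₀pos.le]
      have : -(G x * (Real.exp (2 * F x) / σ x ^ 2))
          = (∫ t in x..(1:ℝ), Real.exp (-(2 * F t))) * (Real.exp (2 * F x) / σ x ^ 2) := by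
        rw [hGx]; ring
      rw [this]
      calc e₀ / (2 * s' ^ 2) * (1/x) ≤ x * e₀ / σ x ^ 2 := step3
        _ = x * (Real.exp (-(2 * F x)) * e₀) * (Real.exp (2 * F x) / σ x ^ 2) := step2.symm
        _ ≤ _ := step1
    -- conclude: 1/x would be integrable near 0, contradiction
    have hJint : IntegrableOn (fun x => G x * (Real.exp (2 * F x) / σ x ^ 2))
        (Set.Ioo 0 (δ/2)) :=
      hGu₀int.mono_set (Set.Ioo_subset_Ioo le_rfl (by linarith))
    have hone : IntegrableOn (fun x => e₀ / (2 * s' ^ 2) * (1/x)) (Set.Ioo 0 (δ/2)) := by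
      refine Integrable.mono hJint ?_ ?_
      · exact ((measurable_const.div measurable_id).const_mul _).aestronglyMeasurable
      · rw [ae_restrict_iff' measurableSet_Ioo]
        filter_upwards with x hx
        have hb1 := hGlb x hx
        have h1 : 0 ≤ e₀ / (2 * s' ^ 2) * (1/x) :=
          mul_nonneg (div_nonneg he₀pos.le (by nlinarith)) (one_div_nonneg.2 hx.1.le)
        rw [Real.norm_eq_abs, Real.norm_eq_abs, abs_of_nonneg h1]
        exact le_trans hb1 (neg_le_abs _)
    have hone' : IntegrableOn (fun x : ℝ => x ^ (-1:ℝ)) (Set.Ioo 0 (δ/2)) := by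
      have h2 := hone.const_mul (2 * s' ^ 2 / e₀)
      refine IntegrableOn.congr_fun h2 ?_ measurableSet_Ioo
      intro x hx
      show 2 * s' ^ 2 / e₀ * (e₀ / (2 * s' ^ 2) * (1/x)) = x ^ (-1:ℝ)
      rw [Real.rpow_neg_one]
      field_simp
    rw [integrableOn_Ioo_rpow_iff (by linarith : (0:ℝ) < δ/2)] at hone'
    linarith
  refine ⟨A, fun x hx => ?_⟩
  have hfx := hformula x hx
  rw [hc0] at hfx
  simp only [hF_def] at hfx
  rw [hfx]; ring
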